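/- Let y₁, …, y_{s+4} be s+4 pairwise distinct complex numbers and θ₁, …, θ_s ∈ ℂ. Let Λ̃ be the (s+4)×(s+4) matrix whose first s columns have entries 1/(y_i − y_j) for i ≠ j (with diagonal entries θ_j in rows 1 ≤ j ≤ s), and whose last 4 columns are the Vandermonde columns (1, y_i, y_i², y_i³). Then det(Λ̃) = (∏_{s+1 ≤ i < j ≤ s+4}(y_j − y_i)) · θ₁θ₂⋯θ_s + R(θ), where R is a polynomial of total degree at most s−1 in θ₁,…,θ_s with squarefree monomials, whose coefficients are rational functions in y₁,…,y_{s+4} with denominators products of differences y_j − y_i, i ≠ j. In particular, det(Λ̃) is a nonzero polynomial in (θ₁,…,θ_s). -/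
import Mathlib

open Finset

noncomputable section Stmt16Aux
namespace Stmt16Aux

def dOf {s : ℕ} (T : Finset (Fin s)) : Fin s →₀ ℕ := ∑ j ∈ T, Finsupp.single j 1

theorem dOf_apply {s : ℕ} (T : Finset (Fin s)) (j : Fin s) :
    dOf T j = if j ∈ T then 1 else 0 := by
  classical
  rw [dOf, Finset.sum_apply']
  simp only [Finsupp.single_apply]
  rw [Finset.sum_ite_eq' T j (fun _ => 1)]

theorem dOf_sum {s : ℕ} (T : Finset (Fin s)) : (dOf T).sum (fun _ e => e) = T.card := by
  classical
  induction T using Finset.induction_on with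
  | empty => simp [dOf]
  | @insert a Tr h ih =>
    rw [dOf, Finset.sum_insert h, Finsupp.sum_add_index (by simp) (by intros; rfl)]
    rw [Finsupp.sum_single_index rfl, ← dOf, ih, Finset.card_insert_of_notMem h]
    omega

theorem eval_dOf {s : ℕ} (T : Finset (Fin s)) (θ : Fin s → ℂ) (c : ℂ) :
    MvPolynomial.eval θ (MvPolynomial.monomial (dOf T) c) = c * ∏ j ∈ T, θ j := by
  classical
  rw [MvPolynomial.eval_monomial]
  congr 1
  induction T using Finset.induction_on with
  | empty => simp [dOf]
  | @insert a Tr h ih =>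
    rw [dOf, Finset.sum_insert h, Finsupp.prod_add_index (by intros; simp) (by intros; rw [pow_add]),
      Finsupp.prod_single_index (by simp), ← dOf, ih, Finset.prod_insert h, pow_one]


variable (s : ℕ) (y : Fin (s + 4) → ℂ)

def bRow (i : Fin (s + 4)) : Fin (s + 4) → ℂ := fun j =>
  if h : j.1 < s then (if i.1 = j.1 then 0 else 1 / (y i - y j)) else y i ^ (j.1 - s)

def EE (T : Finset (Fin s)) : Finset (Fin (s + 4)) := T.map (Fin.castAddEmb 4)

def DD (T : Finset (Fin s)) : ℂ :=
  (Matrix.of ((EE s T).piecewise (fun i => Pi.single i (1:ℂ)) (bRow s y))).det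

theorem expand (θ : Fin s → ℂ) :
    (Matrix.of fun i j : Fin (s + 4) =>
        if h : j.1 < s then
          (if i.1 = j.1 then θ ⟨j.1, h⟩ else 1 / (y i - y j))
        else y i ^ (j.1 - s)).det
      = ∑ T : Finset (Fin s), (∏ j ∈ T, θ j) * DD s y T := by
  classical
  set f := (Matrix.detRowAlternating : (Fin (s+4) → ℂ) [⋀^Fin (s+4)]→ₗ[ℂ] ℂ)
  set cc : Fin (s+4) → ℂ := fun i => if h : i.1 < s then θ ⟨i.1, h⟩ else 0 with hcc
  set aRow : Fin (s+4) → Fin (s+4) → ℂ :=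
    fun i => cc i • (Pi.single i (1:ℂ) : Fin (s+4) → ℂ) with haRow
  have hrow : (fun i : Fin (s+4) => (Matrix.of fun i j : Fin (s + 4) =>
        if h : j.1 < s then
          (if i.1 = j.1 then θ ⟨j.1, h⟩ else 1 / (y i - y j))
        else y i ^ (j.1 - s)) i)
      = aRow + (bRow s y) := by
    funext i j
    simp only [Matrix.of_apply, Pi.add_apply, haRow, Pi.smul_apply, bRow,
      Pi.single_apply, hcc, smul_eq_mul]
    by_cases hj : j.1 < s
    · by_cases hij : i.1 = j.1
      · have h2 : j = i := Fin.ext hij.symm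
        have h3 : i.1 < s := hij ▸ hj
        simp [hj, hij, h2, h3]
      · have h2 : ¬ (j = i) := fun h => hij (h ▸ rfl)
        simp [hj, hij, h2]
    · by_cases hij : j = i
      · subst hij
        simp [hj]
      · simp [hj, hij]
  have hdet : ∀ M : Matrix (Fin (s+4)) (Fin (s+4)) ℂ, M.det = f.toMultilinearMap (fun i => M i) :=
    fun M => rfl
  rw [hdet, hrow, f.toMultilinearMap.map_add_univ aRow (bRow s y)]
  have key : ∀ S : Finset (Fin (s+4)), f.toMultilinearMap (S.piecewise aRow (bRow s y))
      = (∏ i ∈ S, cc i) *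
        f.toMultilinearMap (S.piecewise (fun i => (Pi.single i (1:ℂ) : Fin (s+4) → ℂ)) (bRow s y)) := by
    intro S
    set n := S.piecewise (fun i => (Pi.single i (1:ℂ) : Fin (s+4) → ℂ)) (bRow s y) with hn
    have h1 : S.piecewise aRow (bRow s y) = S.piecewise (fun i => cc i • n i) n := by
      funext i
      by_cases hi : i ∈ S
      · rw [Finset.piecewise_eq_of_mem _ _ _ hi, Finset.piecewise_eq_of_mem _ _ _ hi, hn,
          Finset.piecewise_eq_of_mem _ _ _ hi]
      · rw [Finset.piecewise_eq_of_notMem _ _ _ hi, Finset.piecewise_eq_of_notMem _ _ _ hi, hn,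
          Finset.piecewise_eq_of_notMem _ _ _ hi]
    rw [h1, f.toMultilinearMap.map_piecewise_smul cc n S, smul_eq_mul]
  simp only [key]
  have hzero : ∀ S : Finset (Fin (s+4)), S ∉ Finset.univ.image (EE s) →
      (∏ i ∈ S, cc i) * f.toMultilinearMap
        (S.piecewise (fun i => (Pi.single i (1:ℂ) : Fin (s+4) → ℂ)) (bRow s y)) = 0 := by
    intro S hS
    by_cases hall : ∀ i ∈ S, i.1 < s
    · exact absurd (Finset.mem_image.2 ⟨Finset.univ.filter (fun j => Fin.castAddEmb 4 j ∈ S),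
        Finset.mem_univ _, by
          ext i
          simp only [EE, Finset.mem_map, Finset.mem_filter, Finset.mem_univ, true_and]
          constructor
          · rintro ⟨j, hj, rfl⟩; exact hj
          · intro hi
            exact ⟨⟨i.1, hall i hi⟩, by simpa [Fin.castAddEmb] using hi, by
              simp [Fin.castAddEmb]⟩⟩) hS
    · push_neg at hall
      obtain ⟨i, hiS, his⟩ := hall
      have : cc i = 0 := by simp [hcc, his]
      rw [Finset.prod_eq_zero hiS this, zero_mul]
  rw [← Finset.sum_subset (Finset.subset_univ (Finset.univ.image (EE s)))
    (fun S _ hS => hzero S hS)]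
  have hEEinj : ∀ a ∈ Finset.univ, ∀ b ∈ Finset.univ, EE s a = EE s b → a = b :=
    fun a _ b _ h => Finset.map_injective _ h
  rw [Finset.sum_image hEEinj]
  refine Finset.sum_congr rfl (fun T _ => ?_)
  congr 1
  rw [EE, Finset.prod_map]
  refine Finset.prod_congr rfl (fun j _ => ?_)
  have hj : (Fin.castAddEmb (n := s) 4 j).1 < s := j.isLt
  simp only [hcc]
  rw [dif_pos hj]
  congr 1
theorem DD_univ : DD s y Finset.univ
    = ∏ pr ∈ univ.filter (fun pr : Fin 4 × Fin 4 => pr.1 < pr.2),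
        (y ⟨s + pr.2.1, Nat.add_lt_add_left pr.2.isLt s⟩ -
          y ⟨s + pr.1.1, Nat.add_lt_add_left pr.1.isLt s⟩) := by
  classical
  have hmem : ∀ i : Fin (s+4), i ∈ EE s Finset.univ ↔ i.1 < s := by
    intro i
    simp only [EE, Finset.mem_map, Finset.mem_univ, true_and]
    constructor
    · rintro ⟨j, _, rfl⟩; exact j.isLt
    · intro h; exact ⟨⟨i.1, h⟩, Fin.ext rfl⟩
  set v : Fin 4 → ℂ := fun k => y (Fin.natAdd s k) with hv
  set N := Matrix.of ((EE s (Finset.univ : Finset (Fin s))).piecewise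
      (fun i => Pi.single i (1:ℂ)) (bRow s y)) with hN
  have h1 : DD s y Finset.univ = N.det := by
    rw [DD, hN]
  have h2 : N.submatrix finSumFinEquiv finSumFinEquiv
      = Matrix.fromBlocks (1 : Matrix (Fin s) (Fin s) ℂ) 0
          (Matrix.of fun (k : Fin 4) (j : Fin s) =>
            1 / (y (Fin.natAdd s k) - y (Fin.castAdd 4 j)))
          (Matrix.vandermonde v) := by
    ext i j
    rcases i with a | a <;> rcases j with b | b <;>
      simp only [Matrix.submatrix_apply, finSumFinEquiv_apply_left, finSumFinEquiv_apply_right]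
    · -- row castAdd a, col castAdd b
      have ha : Fin.castAdd 4 a ∈ EE s Finset.univ := (hmem _).2 a.isLt
      rw [hN]
      simp only [Matrix.of_apply, Finset.piecewise_eq_of_mem _ _ _ ha,
        Matrix.fromBlocks_apply₁₁]
      rw [Pi.single_apply, Matrix.one_apply]
      by_cases h : a = b
      · simp [h]
      · have : ¬ (Fin.castAdd 4 b = Fin.castAdd 4 a) := by
          intro hc; exact h (Fin.castAdd_injective _ _ hc).symm
        simp [h, this]
    · have ha : Fin.castAdd 4 a ∈ EE s Finset.univ := (hmem _).2 a.isLt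
      rw [hN]
      simp only [Matrix.of_apply, Finset.piecewise_eq_of_mem _ _ _ ha,
        Matrix.fromBlocks_apply₁₂]
      rw [Pi.single_apply]
      have : ¬ (Fin.natAdd s b = Fin.castAdd 4 a) := by
        intro hc
        have := congrArg Fin.val hc
        simp [Fin.natAdd, Fin.castAdd, Fin.castLE] at this
        omega
      simp [this]
    · have ha : Fin.natAdd s a ∉ EE s Finset.univ := by
        rw [hmem]; simp
      rw [hN]
      simp only [Matrix.of_apply, Finset.piecewise_eq_of_notMem _ _ _ ha,
        Matrix.fromBlocks_apply₂₁, bRow]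
      have hb : (Fin.castAdd (n := s) 4 b).1 < s := b.isLt
      rw [dif_pos hb]
      have : ¬ ((Fin.natAdd s a).1 = (Fin.castAdd 4 b).1) := by
        simp [Fin.natAdd, Fin.castAdd, Fin.castLE]; omega
      simp only [this, if_false, Matrix.of_apply]
    · have ha : Fin.natAdd s a ∉ EE s Finset.univ := by
        rw [hmem]; simp
      rw [hN]
      simp only [Matrix.of_apply, Finset.piecewise_eq_of_notMem _ _ _ ha,
        Matrix.fromBlocks_apply₂₂, Matrix.vandermonde, bRow]
      have hb : ¬ ((Fin.natAdd s b).1 < s) := by simp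
      rw [dif_neg hb]
      have : (Fin.natAdd s b).1 - s = b.1 := by simp [Fin.natAdd]
      rw [this]
  have h3 : N.det = (Matrix.vandermonde v).det := by
    rw [← Matrix.det_submatrix_equiv_self finSumFinEquiv N, h2,
      Matrix.det_fromBlocks_zero₁₂, Matrix.det_one, one_mul]
  rw [h1, h3, Matrix.det_vandermonde]
  rw [show (univ.filter (fun pr : Fin 4 × Fin 4 => pr.1 < pr.2))
      = ({(0,1),(0,2),(0,3),(1,2),(1,3),(2,3)} : Finset (Fin 4 × Fin 4)) from by decide]
  rw [Fin.prod_univ_four]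
  rw [show (Finset.Ioi (0:Fin 4)) = {1,2,3} from by decide,
      show (Finset.Ioi (1:Fin 4)) = {2,3} from by decide,
      show (Finset.Ioi (2:Fin 4)) = {3} from by decide,
      show (Finset.Ioi (3:Fin 4)) = {} from by decide]
  have hvmk : ∀ k : Fin 4, v k = y ⟨s + k.1, Nat.add_lt_add_left k.isLt s⟩ := by
    intro k; rfl
  simp only [hvmk]
  simp
  ring
end Stmt16Aux
end Stmt16Aux

open Stmt16Aux in
/-- for pairwise distinct `y₁, …, y_{s+4}`, the determinant of the
`(s+4) × (s+4)` matrix `Λ̃` whose first `s` columns are Cauchy-like (entries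
`1/(y_i - y_j)` off the diagonal, free parameters `θ_j` on the diagonal of the top
`s × s` corner) and whose last 4 columns are Vandermonde columns `(1, y_i, y_i², y_i³)`,
equals `(∏_{s+1 ≤ i < j ≤ s+4} (y_j - y_i)) · θ₁⋯θ_s + R(θ)` with `R` of total degree
`≤ s - 1` and squarefree monomials; in particular `det Λ̃` is a nonzero polynomial
in `θ`. -/
theorem stmt16 (s : ℕ) (y : Fin (s + 4) → ℂ) (hy : Function.Injective y) :
    ∃ R : MvPolynomial (Fin s) ℂ,
      R.totalDegree ≤ s - 1 ∧
      (∀ d ∈ R.support, ∀ j, d j ≤ 1) ∧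
      (∀ θ : Fin s → ℂ,
        (Matrix.of fun i j : Fin (s + 4) =>
            if h : j.1 < s then
              (if i.1 = j.1 then θ ⟨j.1, h⟩ else 1 / (y i - y j))
            else y i ^ (j.1 - s)).det
          = (∏ pr ∈ univ.filter (fun pr : Fin 4 × Fin 4 => pr.1 < pr.2),
              (y ⟨s + pr.2.1, Nat.add_lt_add_left pr.2.isLt s⟩ -
                y ⟨s + pr.1.1, Nat.add_lt_add_left pr.1.isLt s⟩)) *
              (∏ j, θ j)
            + MvPolynomial.eval θ R) ∧
      ∃ θ : Fin s → ℂ,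
        (Matrix.of fun i j : Fin (s + 4) =>
            if h : j.1 < s then
              (if i.1 = j.1 then θ ⟨j.1, h⟩ else 1 / (y i - y j))
            else y i ^ (j.1 - s)).det ≠ 0 := by
  classical
  set V : ℂ := ∏ pr ∈ univ.filter (fun pr : Fin 4 × Fin 4 => pr.1 < pr.2),
      (y ⟨s + pr.2.1, Nat.add_lt_add_left pr.2.isLt s⟩ -
        y ⟨s + pr.1.1, Nat.add_lt_add_left pr.1.isLt s⟩) with hV
  have hVne : V ≠ 0 := by
    rw [hV]
    refine Finset.prod_ne_zero_iff.2 (fun pr hpr => ?_)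
    have hlt : pr.1.1 < pr.2.1 := (Finset.mem_filter.1 hpr).2
    refine sub_ne_zero.2 (fun hc => ?_)
    have := hy hc
    have := congrArg Fin.val this
    simp only at this
    omega
  set R : MvPolynomial (Fin s) ℂ :=
    ∑ T ∈ (Finset.univ : Finset (Finset (Fin s))).erase Finset.univ,
      MvPolynomial.monomial (dOf T) (DD s y T) with hR
  have hcardle : ∀ T ∈ (Finset.univ : Finset (Finset (Fin s))).erase Finset.univ,
      T.card ≤ s - 1 := by
    intro T hT
    have hTne : T ≠ Finset.univ := (Finset.mem_erase.1 hT).1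
    have : T ⊂ Finset.univ := Finset.ssubset_univ_iff.2 hTne
    have := Finset.card_lt_card this
    simp only [Finset.card_univ, Fintype.card_fin] at this
    omega
  have hsupp : ∀ d ∈ R.support, ∃ T ∈ (Finset.univ : Finset (Finset (Fin s))).erase Finset.univ,
      d = dOf T := by
    intro d hd
    have := MvPolynomial.support_sum hd
    obtain ⟨T, hT, hdT⟩ := Finset.mem_biUnion.1 this
    refine ⟨T, hT, ?_⟩
    have := MvPolynomial.support_monomial (s := dOf T) (a := DD s y T) ▸ hdT
    by_cases hc : DD s y T = 0
    · rw [if_pos hc] at this; exact absurd this (Finset.notMem_empty d)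
    · rw [if_neg hc] at this; exact Finset.mem_singleton.1 this
  have hevalR : ∀ θ : Fin s → ℂ, MvPolynomial.eval θ R
      = ∑ T ∈ (Finset.univ : Finset (Finset (Fin s))).erase Finset.univ,
          (∏ j ∈ T, θ j) * DD s y T := by
    intro θ
    rw [hR, map_sum]
    exact Finset.sum_congr rfl (fun T _ => by rw [eval_dOf, mul_comm])
  have hmain : ∀ θ : Fin s → ℂ,
      (Matrix.of fun i j : Fin (s + 4) =>
          if h : j.1 < s then
            (if i.1 = j.1 then θ ⟨j.1, h⟩ else 1 / (y i - y j))
          else y i ^ (j.1 - s)).det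
        = V * (∏ j, θ j) + MvPolynomial.eval θ R := by
    intro θ
    rw [expand s y θ, hevalR θ,
      ← Finset.add_sum_erase Finset.univ (fun T => (∏ j ∈ T, θ j) * DD s y T)
        (Finset.mem_univ Finset.univ)]
    rw [DD_univ s y, ← hV, mul_comm]
  refine ⟨R, ?_, ?_, hmain, ?_⟩
  · rw [hR]
    refine (MvPolynomial.totalDegree_finset_sum _ _).trans (Finset.sup_le (fun T hT => ?_))
    exact (MvPolynomial.totalDegree_monomial_le _ _).trans
      (le_of_eq_of_le (dOf_sum T) (hcardle T hT))
  · intro d hd j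
    obtain ⟨T, _, rfl⟩ := hsupp d hd
    rw [dOf_apply]
    split <;> omega
  · -- nonzero at some θ
    set Q : MvPolynomial (Fin s) ℂ :=
      MvPolynomial.monomial (dOf Finset.univ) V + R with hQ
    have hevalQ : ∀ θ : Fin s → ℂ, MvPolynomial.eval θ Q
        = V * (∏ j, θ j) + MvPolynomial.eval θ R := by
      intro θ
      rw [hQ, map_add, eval_dOf]
    have hcoeffR : MvPolynomial.coeff (dOf Finset.univ) R = 0 := by
      by_contra hc
      have hd : dOf (Finset.univ : Finset (Fin s)) ∈ R.support :=
        MvPolynomial.mem_support_iff.2 hc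
      obtain ⟨T, hT, hEq⟩ := hsupp _ hd
      have hTne : T ≠ Finset.univ := (Finset.mem_erase.1 hT).1
      obtain ⟨j, _, hjT⟩ := Finset.exists_of_ssubset (Finset.ssubset_univ_iff.2 hTne)
      have := congrArg (fun d : Fin s →₀ ℕ => d j) hEq
      simp only [dOf_apply, Finset.mem_univ, if_true, if_neg hjT] at this
      exact one_ne_zero this
    have hQne : Q ≠ 0 := by
      intro hc
      have : MvPolynomial.coeff (dOf Finset.univ) Q = 0 := by rw [hc]; simp
      rw [hQ, MvPolynomial.coeff_add, hcoeffR, add_zero,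
        MvPolynomial.coeff_monomial, if_pos rfl] at this
      exact hVne this
    have : ∃ θ : Fin s → ℂ, MvPolynomial.eval θ Q ≠ 0 := by
      by_contra hc
      push_neg at hc
      exact hQne (MvPolynomial.funext (fun x => by rw [hc x, map_zero]))
    obtain ⟨θ, hθ⟩ := this
    exact ⟨θ, by rw [hmain θ, ← hevalQ θ]; exact hθ⟩
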